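/- Let G be a group acting on a set M, let K : G → M → ℝ be a one-cocycle modulo constants, let x ∈ M, and set 𝔊(g,h) := K g (h • x) − K g x. Let S be a set of elements of G and C > 0 a constant with |𝔊(s,k)| ≤ C for all s ∈ S and all k ∈ G. Suppose g, h ∈ G satisfy g • x = x and g • (h • x) = h • x. Then for every n ≥ 1 and every nonempty list l of elements of S with l.prod = g^n, one has (n : ℝ)·|𝔊(g,h)| ≤ 2·C·(l.length). Consequently, if 𝔊(g,h) ≠ 0 then the translation length of g with respect to S is at least |𝔊(g,h)|/(2C) > 0, i.e. the cyclic subgroup generated by g is undistorted. (This is the abstract mechanism behind Polterovich's theorem on Hamiltonian actions on symplectically hyperbolic manifolds.) -/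
import Mathlib


/-- The abstract mechanism behind Polterovich's theorem on Hamiltonian actions on
symplectically hyperbolic manifolds: if the Ismagilov–Losik–Michor cocycle
`𝔊(g,h) := K g (h • x) − K g x` of a one-cocycle modulo constants `K` is bounded by
`C` on a set `S` of group elements, and `g` fixes both `x` and `h • x`, then every
word in `S` representing `g^n` has length at least `n·|𝔊(g,h)|/(2C)`; consequently,
if `𝔊(g,h) ≠ 0` then the cyclic subgroup generated by `g` is undistorted. -/
theorem undistorted_of_ILM_nonzero {G M : Type*} [Group G] [MulAction G M]
    (K : G → M → ℝ)
    (hK : ∀ g h : G, ∃ c : ℝ, ∀ y : M, K (g * h) y = K g (h • y) + K h y + c)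
    (x : M) (S : Set G) (C : ℝ) (hC : 0 < C)
    (hbound : ∀ s ∈ S, ∀ k : G, |K s (k • x) - K s x| ≤ C)
    (g h : G) (hgx : g • x = x) (hghx : g • (h • x) = h • x)
    (n : ℕ) (hn : 1 ≤ n)
    (l : List G) (hl : ∀ s ∈ l, s ∈ S) (hne : l ≠ []) (hprod : l.prod = g ^ n) :
    (n : ℝ) * |K g (h • x) - K g x| ≤ 2 * C * l.length := by
  have hgx' : ∀ m : ℕ, (g ^ m) • x = x := by
    intro m; induction m with
    | zero => simp
    | succ m ih => rw [pow_succ, mul_smul, hgx, ih]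
  have hghx' : ∀ m : ℕ, (g ^ m) • (h • x) = h • x := by
    intro m; induction m with
    | zero => simp
    | succ m ih => rw [pow_succ, mul_smul, hghx, ih]
  have hone : K 1 (h • x) = K 1 x := by
    obtain ⟨c, hc⟩ := hK 1 1
    have h1 : ∀ y : M, K 1 y = -c := by
      intro y
      have := hc y
      simp only [one_mul, one_smul] at this
      linarith
    rw [h1, h1]
  have hpow : ∀ m : ℕ, K (g ^ m) (h • x) - K (g ^ m) x
      = m * (K g (h • x) - K g x) := by
    intro m; induction m with
    | zero => simp [hone]
    | succ m ih =>
      obtain ⟨c, hc⟩ := hK g (g ^ m)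
      have h1 := hc (h • x)
      have h2 := hc x
      rw [hghx' m] at h1
      rw [hgx' m] at h2
      rw [← pow_succ'] at h1 h2
      rw [h1, h2]
      push_cast
      linarith [ih]
  have hlist : ∀ t : List G, t ≠ [] → (∀ s ∈ t, s ∈ S) →
      |K t.prod (h • x) - K t.prod x| ≤ 2 * C * t.length := by
    intro t
    induction t with
    | nil => intro h'; exact absurd rfl h'
    | cons s t ih =>
      intro _ hmem
      rcases eq_or_ne t [] with rfl | htne
      · simp only [List.prod_cons, List.prod_nil, mul_one, List.length_cons,
          List.length_nil]
        have hb := hbound s (hmem s (by simp)) h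
        push_cast
        linarith [hb]
      · obtain ⟨c, hc⟩ := hK s t.prod
        have h1 := hc (h • x)
        have h2 := hc x
        have hsS : s ∈ S := hmem s (by simp)
        have b1 : |K s (t.prod • (h • x)) - K s x| ≤ C := by
          have := hbound s hsS (t.prod * h)
          rwa [mul_smul] at this
        have b2 : |K s (t.prod • x) - K s x| ≤ C := hbound s hsS t.prod
        have ihb := ih htne (fun a ha => hmem a (List.mem_cons_of_mem _ ha))
        rw [List.prod_cons, h1, h2]
        simp only [List.length_cons]
        push_cast
        have hdecomp : K s (t.prod • (h • x)) + K t.prod (h • x) + c -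
            (K s (t.prod • x) + K t.prod x + c)
            = (K s (t.prod • (h • x)) - K s x) - (K s (t.prod • x) - K s x)
              + (K t.prod (h • x) - K t.prod x) := by ring
        rw [hdecomp]
        rw [abs_le] at b1 b2 ihb ⊢
        constructor <;> [skip; skip] <;> nlinarith [b1.1, b1.2, b2.1, b2.2, ihb.1, ihb.2]
  have key := hlist l hne hl
  rw [hprod, hpow n] at key
  rwa [abs_mul, abs_of_nonneg (by positivity : (0:ℝ) ≤ (n:ℝ))] at key
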